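/- Let T = {E₁ − E₂, E₂ − E₃, E₃ − E₄, E₄ − E₅, E₅ − E₆, L − E₁ − E₂ − E₃} (the configuration type E₆). Then the subgroup ⟨T⟩ of V generated by T is exactly the orthogonal complement K^⊥ = {C ∈ V : ⟨C,K⟩ = 0}, and the quotient group V/⟨T⟩ is isomorphic to ℤ; in particular the torsion subgroup Tors_T is trivial. -/

import Mathlib

/-- `V = ℤ⁷`, with coordinate 0 corresponding to `L` and coordinates 1,…,6 to `E₁,…,E₆`. -/
abbrev V : Type := Fin 7 → ℤ

/-- The intersection form: `⟨x,y⟩ = x₀y₀ − Σᵢ xᵢyᵢ`. -/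
def form (x y : V) : ℤ := x 0 * y 0 - ∑ i : Fin 6, x i.succ * y i.succ

/-- The class `L` of a line. -/
def Lv : V := fun j => if j = 0 then 1 else 0

/-- The exceptional classes `E₁,…,E₆` (indexed by `Fin 6`). -/
def Ev (i : Fin 6) : V := fun j => if j = i.succ then 1 else 0

/-- The canonical class `K = −3L + E₁ + ⋯ + E₆`. -/
def Kv : V := -(3 : ℤ) • Lv + ∑ i : Fin 6, Ev i

/-- `𝒱″ = {Eᵢ − Eⱼ : 1 ≤ i < j ≤ 6}`. -/
def Vpp : Set V := {v | ∃ i j : Fin 6, i < j ∧ v = Ev i - Ev j}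

/-- `𝒧″ = {L − Eᵢ − Eⱼ − Eₖ : 1 ≤ i < j < k ≤ 6}`. -/
def Lpp : Set V := {v | ∃ i j k : Fin 6, i < j ∧ j < k ∧ v = Lv - Ev i - Ev j - Ev k}

/-- `𝒬″ = {2L − E₁ − ⋯ − E₆}`. -/
def Qpp : Set V := {v | v = (2 : ℤ) • Lv - ∑ i : Fin 6, Ev i}

/-- `R = 𝒱″ ∪ 𝒧″ ∪ 𝒬″`. -/
def Rset : Set V := Vpp ∪ Lpp ∪ Qpp

/-- A subset `T` is pairwise nonnegative if `⟨C,D⟩ ≥ 0` for all distinct `C,D ∈ T`. -/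
def PairwiseNonneg (T : Set V) : Prop := ∀ C ∈ T, ∀ D ∈ T, C ≠ D → 0 ≤ form C D

def phi : V →+ ℤ where
  toFun C := form C Kv
  map_zero' := by simp [form]
  map_add' x y := by
    simp only [form, Fin.sum_univ_six, Pi.add_apply]; ring

lemma Kv_eq : Kv = ![-3, 1, 1, 1, 1, 1, 1] := by
  funext j
  fin_cases j <;> simp [Kv, Lv, Ev, Fin.sum_univ_six] <;> decide

lemma phi_eq (C : V) : phi C = -3 * C 0 - (C 1 + C 2 + C 3 + C 4 + C 5 + C 6) := by
  have h0 : (0:Fin 6).succ = (1:Fin 7) := rfl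
  have h1 : (1:Fin 6).succ = (2:Fin 7) := rfl
  have h2 : (2:Fin 6).succ = (3:Fin 7) := rfl
  have h3 : (3:Fin 6).succ = (4:Fin 7) := rfl
  have h4 : (4:Fin 6).succ = (5:Fin 7) := rfl
  have h5 : (5:Fin 6).succ = (6:Fin 7) := rfl
  have k5 : (![-3, 1, 1, 1, 1, 1, 1] : V) 5 = 1 := rfl
  have k6 : (![-3, 1, 1, 1, 1, 1, 1] : V) 6 = 1 := rfl
  simp only [phi, AddMonoidHom.coe_mk, ZeroHom.coe_mk, form, Kv_eq, Fin.sum_univ_six,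
    h0, h1, h2, h3, h4, h5, k5, k6]
  norm_num
  simp only [show (![-3, 1, 1, 1, 1, 1, 1] : V) 2 = 1 from rfl, show (![-3, 1, 1, 1, 1, 1, 1] : V) 3 = 1 from rfl, show (![-3, 1, 1, 1, 1, 1, 1] : V) 4 = 1 from rfl]; ring

lemma closure_eq_ker :
    AddSubgroup.closure ({Ev 0 - Ev 1, Ev 1 - Ev 2, Ev 2 - Ev 3, Ev 3 - Ev 4,
        Ev 4 - Ev 5, Lv - Ev 0 - Ev 1 - Ev 2} : Set V) = phi.ker := by
  apply le_antisymm
  · rw [AddSubgroup.closure_le]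
    intro v hv
    simp only [Set.mem_insert_iff, Set.mem_singleton_iff] at hv
    rcases hv with h | h | h | h | h | h <;> subst h <;>
      · show phi _ = 0
        rw [phi_eq]; decide
  · intro C hC
    have hC' : -3 * C 0 - (C 1 + C 2 + C 3 + C 4 + C 5 + C 6) = 0 := by
      rw [← phi_eq]; exact hC
    have hrep : C = (C 0 + C 1) • (Ev 0 - Ev 1) + (2*C 0 + C 1 + C 2) • (Ev 1 - Ev 2)
        + (3*C 0 + C 1 + C 2 + C 3) • (Ev 2 - Ev 3)
        + (3*C 0 + C 1 + C 2 + C 3 + C 4) • (Ev 3 - Ev 4)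
        + (3*C 0 + C 1 + C 2 + C 3 + C 4 + C 5) • (Ev 4 - Ev 5)
        + (C 0) • (Lv - Ev 0 - Ev 1 - Ev 2) := by
      have v60 : ((0:Fin 6) : ℕ) = 0 := rfl
      have v61 : ((1:Fin 6) : ℕ) = 1 := rfl
      have v62 : ((2:Fin 6) : ℕ) = 2 := rfl
      have v63 : ((3:Fin 6) : ℕ) = 3 := rfl
      have v64 : ((4:Fin 6) : ℕ) = 4 := rfl
      have v65 : ((5:Fin 6) : ℕ) = 5 := rfl
      have w0 : ((0:Fin 7) : ℕ) = 0 := rfl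
      have w1 : ((1:Fin 7) : ℕ) = 1 := rfl
      have w2 : ((2:Fin 7) : ℕ) = 2 := rfl
      have w3 : ((3:Fin 7) : ℕ) = 3 := rfl
      have w4 : ((4:Fin 7) : ℕ) = 4 := rfl
      have w5 : ((5:Fin 7) : ℕ) = 5 := rfl
      have w6 : ((6:Fin 7) : ℕ) = 6 := rfl
      have m2 : (⟨2, by omega⟩ : Fin 7) = 2 := rfl
      have m3 : (⟨3, by omega⟩ : Fin 7) = 3 := rfl
      have m4 : (⟨4, by omega⟩ : Fin 7) = 4 := rfl
      have m5 : (⟨5, by omega⟩ : Fin 7) = 5 := rfl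
      have m6 : (⟨6, by omega⟩ : Fin 7) = 6 := rfl
      funext j
      fin_cases j <;>
        (simp only [m2, m3, m4, m5, m6, Pi.add_apply, Pi.smul_apply, Pi.sub_apply,
            smul_eq_mul, Ev, Lv, Fin.ext_iff, Fin.val_succ,
            v60, v61, v62, v63, v64, v65, w0, w1, w2, w3, w4, w5, w6];
          norm_num) <;> omega
    rw [hrep]
    refine add_mem (add_mem (add_mem (add_mem (add_mem ?_ ?_) ?_) ?_) ?_) ?_ <;>
      exact AddSubgroup.zsmul_mem _ (AddSubgroup.subset_closure (by simp)) _

lemma phi_surj : Function.Surjective phi := by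
  intro n
  refine ⟨(-n) • Ev 0, ?_⟩
  rw [map_zsmul]
  have : phi (Ev 0) = -1 := by rw [phi_eq]; decide
  rw [this, smul_eq_mul]; ring


/-- for the configuration type `E₆`,
`T = {E₁−E₂, E₂−E₃, E₃−E₄, E₄−E₅, E₅−E₆, L−E₁−E₂−E₃}`, the subgroup `⟨T⟩` is exactly
`K^⊥ = {C : ⟨C,K⟩ = 0}`, the quotient `V/⟨T⟩` is isomorphic to `ℤ`, and the torsion
subgroup of `V/⟨T⟩` is trivial. -/
theorem type_E6 :
    ((AddSubgroup.closure ({Ev 0 - Ev 1, Ev 1 - Ev 2, Ev 2 - Ev 3, Ev 3 - Ev 4,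
        Ev 4 - Ev 5, Lv - Ev 0 - Ev 1 - Ev 2} : Set V) : Set V) = {C : V | form C Kv = 0}) ∧
    Nonempty ((V ⧸ AddSubgroup.closure ({Ev 0 - Ev 1, Ev 1 - Ev 2, Ev 2 - Ev 3, Ev 3 - Ev 4,
        Ev 4 - Ev 5, Lv - Ev 0 - Ev 1 - Ev 2} : Set V)) ≃+ ℤ) ∧
    Subsingleton (AddCommGroup.torsion
      (V ⧸ AddSubgroup.closure ({Ev 0 - Ev 1, Ev 1 - Ev 2, Ev 2 - Ev 3, Ev 3 - Ev 4,
        Ev 4 - Ev 5, Lv - Ev 0 - Ev 1 - Ev 2} : Set V))) := by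
  have he : Nonempty ((V ⧸ AddSubgroup.closure ({Ev 0 - Ev 1, Ev 1 - Ev 2, Ev 2 - Ev 3,
      Ev 3 - Ev 4, Ev 4 - Ev 5, Lv - Ev 0 - Ev 1 - Ev 2} : Set V)) ≃+ ℤ) := by
    rw [closure_eq_ker]
    exact ⟨QuotientAddGroup.quotientKerEquivOfSurjective phi phi_surj⟩
  refine ⟨?_, he, ?_⟩
  · rw [closure_eq_ker]
    rfl
  · obtain ⟨e⟩ := he
    constructor
    intro x y
    have key : ∀ z : AddCommGroup.torsion (V ⧸ AddSubgroup.closure ({Ev 0 - Ev 1, Ev 1 - Ev 2,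
        Ev 2 - Ev 3, Ev 3 - Ev 4, Ev 4 - Ev 5, Lv - Ev 0 - Ev 1 - Ev 2} : Set V)),
        (z : _) = 0 := by
      rintro ⟨z, hz⟩
      have hz' : IsOfFinAddOrder z := hz
      obtain ⟨n, hn, hns⟩ := (isOfFinAddOrder_iff_nsmul_eq_zero).mp hz'
      have : (n : ℤ) * e z = 0 := by
        have := congrArg e hns
        simpa [map_nsmul, nsmul_eq_mul] using this
      have hez : e z = 0 := by
        rcases mul_eq_zero.mp this with h | h
        · exact absurd h (by exact_mod_cast hn.ne')
        · exact h
      have : z = 0 := by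
        apply e.injective
        simpa using hez
      simpa using this
    exact Subtype.ext (by rw [key x, key y])
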